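/- If every chain in the sequence a_1, …, a_r has at most c elements, then r ≤ ξ·c. -/

import Mathlib

/-- **Chain bound.** If `a : Fin r → V` is an injective sequence, `E` is a symmetric
relation ("essential intersection"), every chain (strictly increasing subsequence with
consecutive members related by `E`) has at most `c` elements, and every `E`-free
(pairwise non-related) subset of indices has cardinality at most `ξ`, then `r ≤ ξ * c`. -/
theorem chain_bound {V : Type*} (E : V → V → Prop) (hsymm : ∀ x y, E x y → E y x)
    (r ξ c : ℕ) (a : Fin r → V) (hinj : Function.Injective a)
    (hchain : ∀ s : ℕ, ∀ j : Fin s → Fin r, StrictMono j →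
      (∀ i : Fin s, ∀ h : (i : ℕ) + 1 < s, E (a (j i)) (a (j ⟨(i : ℕ) + 1, h⟩))) → s ≤ c)
    (hfree : ∀ T : Finset (Fin r),
      (∀ i ∈ T, ∀ j ∈ T, i ≠ j → ¬ E (a i) (a j)) → T.card ≤ ξ) :
    r ≤ ξ * c := by
  rcases Nat.eq_zero_or_pos r with hr | hr
  · omega
  -- the set of (lengths minus one) of chains ending at i
  set S : Fin r → Set ℕ := fun i => {s | ∃ j : Fin (s+1) → Fin r, StrictMono j ∧
      (∀ m : Fin (s+1), ∀ h : (m : ℕ) + 1 < s + 1, E (a (j m)) (a (j ⟨(m : ℕ) + 1, h⟩))) ∧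
      j (Fin.last s) = i} with hS
  have hne : ∀ i, 0 ∈ S i := by
    intro i
    refine ⟨fun _ => i, ?_, ?_, rfl⟩
    · intro x y hxy
      have hx := x.isLt; have hy := y.isLt
      exact absurd (Fin.lt_def.mp hxy) (by omega)
    · intro m h; omega
  have hbdd : ∀ i, BddAbove (S i) := by
    intro i
    refine ⟨c, fun s hs => ?_⟩
    obtain ⟨j, hmono, hch, _⟩ := hs
    have := hchain (s+1) j hmono hch
    omega
  set g : Fin r → ℕ := fun i => sSup (S i) with hg
  have hgmem : ∀ i, g i ∈ S i := fun i => Nat.sSup_mem ⟨0, hne i⟩ (hbdd i)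
  have hgc : ∀ i, g i + 1 ≤ c := by
    intro i
    obtain ⟨j, hmono, hch, _⟩ := hgmem i
    exact hchain (g i + 1) j hmono hch
  have hc1 : 1 ≤ c := le_trans (by omega) (hgc ⟨0, hr⟩)
  -- key: along an E-edge, g strictly increases
  have key : ∀ i k : Fin r, i < k → E (a i) (a k) → g i < g k := by
    intro i k hik hE
    obtain ⟨j, hmono, hch, hlast⟩ := hgmem i
    have hmem : g i + 1 ∈ S k := by
      refine ⟨fun m => if h : (m : ℕ) < g i + 1 then j ⟨m, h⟩ else k, ?_, ?_, ?_⟩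
      · intro x y hxy
        have hx := x.isLt; have hy := y.isLt
        simp only [Fin.lt_def] at hxy
        by_cases h1 : (x : ℕ) < g i + 1
        · by_cases h2 : (y : ℕ) < g i + 1
          · have := hmono (show (⟨x, h1⟩ : Fin (g i + 1)) < ⟨y, h2⟩ from Fin.mk_lt_mk.mpr hxy)
            simpa only [dif_pos h1, dif_pos h2] using this
          · simp only [dif_pos h1, dif_neg h2]
            have hle : j ⟨x, h1⟩ ≤ j (Fin.last (g i)) := by
              apply hmono.monotone
              simp [Fin.le_def, Fin.last]; omega
            rw [hlast] at hle
            exact lt_of_le_of_lt hle hik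
        · omega
      · intro m h
        by_cases h1 : (m : ℕ) + 1 < g i + 1
        · have h0 : (m : ℕ) < g i + 1 := by omega
          simp only [dif_pos h1, dif_pos h0]
          exact hch ⟨m, h0⟩ (by simpa using h1)
        · have hm : (m : ℕ) = g i := by omega
          have h0 : (m : ℕ) < g i + 1 := by omega
          simp only [dif_pos h0, dif_neg (show ¬ (m : ℕ) + 1 < g i + 1 by omega)]
          have heq : (⟨(m : ℕ), h0⟩ : Fin (g i + 1)) = Fin.last (g i) := by
            ext; simpa using hm
          rw [heq, hlast]; exact hE
      · simp [Fin.last]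
    have h2 : g i + 1 ≤ g k := le_csSup (hbdd k) hmem
    omega
  -- count fiberwise
  have hmap : ∀ i : Fin r, i ∈ (Finset.univ : Finset (Fin r)) → g i ∈ Finset.range c := by
    intro i _
    simp only [Finset.mem_range]
    have := hgc i; omega
  have hcard := Finset.card_eq_sum_card_fiberwise hmap
  have hfib : ∀ v ∈ Finset.range c,
      (Finset.univ.filter (fun i => g i = v)).card ≤ ξ := by
    intro v _
    apply hfree
    intro i hi k hk hik hE
    simp only [Finset.mem_filter] at hi hk
    rcases lt_trichotomy i k with h | h | h
    · have := key i k h hE; omega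
    · exact hik h
    · have := key k i h (hsymm _ _ hE); omega
  calc r = (Finset.univ : Finset (Fin r)).card := by simp
    _ = ∑ v ∈ Finset.range c, (Finset.univ.filter (fun i => g i = v)).card := hcard
    _ ≤ ∑ _v ∈ Finset.range c, ξ := Finset.sum_le_sum hfib
    _ = c * ξ := by simp [Finset.sum_const, mul_comm]
    _ = ξ * c := mul_comm c ξ
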